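/- Let 𝔽 be a field and R = 𝔽[u] the polynomial ring in one variable. Let M₁ and M₂ be finitely generated R-modules and φᵢ : Mᵢ → R (i = 1, 2) R-linear maps whose kernels are torsion R-modules and whose ranges equal the principal ideals generated by u^{h₁} and u^{h₂}, respectively. Then the R-linear map ψ : M₁ ⊗_R M₂ → R determined by ψ(m₁ ⊗ m₂) = φ₁(m₁)·φ₂(m₂) has torsion kernel and its range equals the principal ideal generated by u^{h₁+h₂}. -/

import Mathlib

open Polynomial TensorProduct

/-- Additivity for the tower lemma data: if `φᵢ : Mᵢ → 𝔽[u]` have torsion kernels and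
ranges `(u^{hᵢ})`, then `ψ : M₁ ⊗ M₂ → 𝔽[u]`, `ψ(m₁ ⊗ m₂) = φ₁(m₁)·φ₂(m₂)`, has torsion
kernel and range `(u^{h₁+h₂})`. -/
theorem stmt_7 (𝔽 : Type*) [Field 𝔽]
    (M₁ M₂ : Type*) [AddCommGroup M₁] [Module (Polynomial 𝔽) M₁]
    [AddCommGroup M₂] [Module (Polynomial 𝔽) M₂]
    [Module.Finite (Polynomial 𝔽) M₁] [Module.Finite (Polynomial 𝔽) M₂]
    (φ₁ : M₁ →ₗ[Polynomial 𝔽] Polynomial 𝔽) (φ₂ : M₂ →ₗ[Polynomial 𝔽] Polynomial 𝔽)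
    (h₁ h₂ : ℕ)
    (htor₁ : Module.IsTorsion (Polynomial 𝔽) (LinearMap.ker φ₁))
    (htor₂ : Module.IsTorsion (Polynomial 𝔽) (LinearMap.ker φ₂))
    (hrange₁ : LinearMap.range φ₁ = Ideal.span {(X : Polynomial 𝔽) ^ h₁})
    (hrange₂ : LinearMap.range φ₂ = Ideal.span {(X : Polynomial 𝔽) ^ h₂})
    (ψ : M₁ ⊗[Polynomial 𝔽] M₂ →ₗ[Polynomial 𝔽] Polynomial 𝔽)
    (hψ : ∀ (m₁ : M₁) (m₂ : M₂), ψ (m₁ ⊗ₜ m₂) = φ₁ m₁ * φ₂ m₂) :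
    Module.IsTorsion (Polynomial 𝔽) (LinearMap.ker ψ) ∧
    LinearMap.range ψ = Ideal.span {(X : Polynomial 𝔽) ^ (h₁ + h₂)} := by
  classical
  set R := Polynomial 𝔽
  -- choose wᵢ with φᵢ wᵢ = X ^ hᵢ
  have hx1 : (X : R) ^ h₁ ∈ LinearMap.range φ₁ := by
    rw [hrange₁]; exact Ideal.subset_span (Set.mem_singleton _)
  have hx2 : (X : R) ^ h₂ ∈ LinearMap.range φ₂ := by
    rw [hrange₂]; exact Ideal.subset_span (Set.mem_singleton _)
  obtain ⟨w₁, hw₁⟩ := hx1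
  obtain ⟨w₂, hw₂⟩ := hx2
  -- torsion witnesses for kernel elements
  have tor₁ : ∀ m : M₁, φ₁ m = 0 → ∃ r : R, r ≠ 0 ∧ r • m = 0 := by
    intro m hm
    obtain ⟨r, hr⟩ := @htor₁ ⟨m, LinearMap.mem_ker.mpr hm⟩
    refine ⟨r.1, nonZeroDivisors.ne_zero r.2, ?_⟩
    have := congrArg (Subtype.val) hr
    simpa [Submonoid.smul_def] using this
  have tor₂ : ∀ m : M₂, φ₂ m = 0 → ∃ r : R, r ≠ 0 ∧ r • m = 0 := by
    intro m hm
    obtain ⟨r, hr⟩ := @htor₂ ⟨m, LinearMap.mem_ker.mpr hm⟩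
    refine ⟨r.1, nonZeroDivisors.ne_zero r.2, ?_⟩
    have := congrArg (Subtype.val) hr
    simpa [Submonoid.smul_def] using this
  -- key structural claim
  have key : ∀ z : M₁ ⊗[R] M₂, ∃ r : R, r ≠ 0 ∧ ∃ c : R,
      r • z = c • (w₁ ⊗ₜ[R] w₂) := by
    intro z
    induction z using TensorProduct.induction_on with
    | zero => exact ⟨1, one_ne_zero, 0, by simp⟩
    | tmul m₁ m₂ =>
        have hm1 : φ₁ m₁ ∈ Ideal.span {(X : R) ^ h₁} := by
          rw [← hrange₁]; exact LinearMap.mem_range_self φ₁ m₁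
        rw [Ideal.mem_span_singleton] at hm1
        obtain ⟨a, ha⟩ := hm1
        have hm2 : φ₂ m₂ ∈ Ideal.span {(X : R) ^ h₂} := by
          rw [← hrange₂]; exact LinearMap.mem_range_self φ₂ m₂
        rw [Ideal.mem_span_singleton] at hm2
        obtain ⟨b, hb⟩ := hm2
        have hk1 : φ₁ (m₁ - a • w₁) = 0 := by
          rw [map_sub, map_smul, hw₁, ha, smul_eq_mul, mul_comm, sub_self]
        have hk2 : φ₂ (m₂ - b • w₂) = 0 := by
          rw [map_sub, map_smul, hw₂, hb, smul_eq_mul, mul_comm, sub_self]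
        obtain ⟨r₁, hr₁, hr₁0⟩ := tor₁ _ hk1
        obtain ⟨r₂, hr₂, hr₂0⟩ := tor₂ _ hk2
        have e₁ : r₁ • m₁ = (r₁ * a) • w₁ := by
          have := sub_eq_zero.mp (by simpa [smul_sub] using hr₁0)
          rw [this, smul_smul]
        have e₂ : r₂ • m₂ = (r₂ * b) • w₂ := by
          have := sub_eq_zero.mp (by simpa [smul_sub] using hr₂0)
          rw [this, smul_smul]
        refine ⟨r₁ * r₂, mul_ne_zero hr₁ hr₂, (r₁ * a) * (r₂ * b), ?_⟩
        calc (r₁ * r₂) • (m₁ ⊗ₜ[R] m₂)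
            = (r₁ • m₁) ⊗ₜ[R] (r₂ • m₂) := by
              rw [mul_smul, ← tmul_smul, smul_tmul']
          _ = ((r₁ * a) • w₁) ⊗ₜ[R] ((r₂ * b) • w₂) := by rw [e₁, e₂]
          _ = ((r₁ * a) * (r₂ * b)) • (w₁ ⊗ₜ[R] w₂) := by
              rw [tmul_smul, ← smul_tmul', smul_smul, mul_comm (r₂ * b)]
    | add z₁ z₂ ih₁ ih₂ =>
        obtain ⟨r, hr, c, hc⟩ := ih₁
        obtain ⟨r', hr', c', hc'⟩ := ih₂
        refine ⟨r * r', mul_ne_zero hr hr', r' * c + r * c', ?_⟩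
        have h1 : (r * r') • z₁ = (r' * c) • (w₁ ⊗ₜ[R] w₂) := by
          rw [mul_comm, mul_smul, hc, smul_smul]
        have h2 : (r * r') • z₂ = (r * c') • (w₁ ⊗ₜ[R] w₂) := by
          rw [mul_smul, hc', smul_smul]
        rw [smul_add, h1, h2, ← add_smul]
  constructor
  · -- torsion kernel
    intro x
    obtain ⟨z, hz⟩ := x
    have hz' : ψ z = 0 := hz
    obtain ⟨r, hr, c, hc⟩ := key z
    have hXne : ((X : R) ^ h₁ * (X : R) ^ h₂) ≠ 0 := by
      apply mul_ne_zero <;> exact pow_ne_zero _ X_ne_zero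
    have hc0 : c = 0 := by
      have := congrArg ψ hc
      rw [map_smul, map_smul, hz', smul_zero, hψ, hw₁, hw₂, smul_eq_mul] at this
      rcases mul_eq_zero.mp this.symm with h | h
      · exact h
      · exact absurd h hXne
    have hrz : r • z = 0 := by rw [hc, hc0, zero_smul]
    refine ⟨⟨r, mem_nonZeroDivisors_of_ne_zero hr⟩, ?_⟩
    exact Subtype.ext (by simpa using hrz)
  · -- range
    apply le_antisymm
    · rintro x ⟨z, rfl⟩
      induction z using TensorProduct.induction_on with
      | zero => rw [map_zero]; exact Ideal.zero_mem _
      | tmul m₁ m₂ =>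
          rw [hψ, Ideal.mem_span_singleton, pow_add]
          have hm1 : (X : R) ^ h₁ ∣ φ₁ m₁ := by
            rw [← Ideal.mem_span_singleton, ← hrange₁]
            exact LinearMap.mem_range_self φ₁ m₁
          have hm2 : (X : R) ^ h₂ ∣ φ₂ m₂ := by
            rw [← Ideal.mem_span_singleton, ← hrange₂]
            exact LinearMap.mem_range_self φ₂ m₂
          exact mul_dvd_mul hm1 hm2
      | add z₁ z₂ ih₁ ih₂ =>
          rw [map_add]; exact Ideal.add_mem _ ih₁ ih₂
    · rw [Ideal.span_le]
      rintro x rfl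
      exact ⟨w₁ ⊗ₜ[R] w₂, by rw [hψ, hw₁, hw₂, pow_add]⟩
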